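/- arXiv:1911.01416 — 3 statements merged into one kernel-verified Lean document; each statement's English description precedes it below -/
import Mathlib

section
/- For d ≥ 3 and any K ≥ 0, there is a constant C depending only on d such that for all t ≥ -K, ∫_{-K}^t min(1, (t-s)^{-d/2}) · min(1, (s+K)^{-(d/2-1)}) ds ≤ C · min(1, (t+K)^{-(d/2-1)}). -/
open MeasureTheory Real Set

private lemma aux_min_nonneg {x q : ℝ} (hx : 0 ≤ x) : 0 ≤ min 1 (x ^ q) :=
  le_min zero_le_one (Real.rpow_nonneg hx q)

private lemma aux_integrableOn {f : ℝ → ℝ} {a b : ℝ} (hf : Measurable f)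
    (h : ∀ x ∈ Set.Ioc a b, |f x| ≤ 1) :
    IntegrableOn f (Set.Ioc a b) := by
  refine Integrable.mono' (g := fun _ => (1 : ℝ))
    (integrableOn_const measure_Ioc_lt_top.ne) hf.aestronglyMeasurable
    ((ae_restrict_iff' measurableSet_Ioc).mpr (ae_of_all _ h))

private lemma aux_intervalIntegrable {f : ℝ → ℝ} {a b : ℝ} (hab : a ≤ b) (hf : Measurable f)
    (h : ∀ x ∈ Set.Ioc a b, |f x| ≤ 1) :
    IntervalIntegrable f volume a b :=
  (intervalIntegrable_iff_integrableOn_Ioc_of_le hab).mpr (aux_integrableOn hf h)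

private lemma aux_abs_min_le {x q : ℝ} (hx : 0 ≤ x) : |min 1 (x ^ q)| ≤ 1 :=
  abs_le.mpr ⟨by linarith [aux_min_nonneg (q := q) hx], min_le_left _ _⟩

private lemma min_base_mono {x y q : ℝ} (hx : 0 < x) (hxy : x ≤ y) (hq : q ≤ 0) :
    min 1 (y ^ q) ≤ min 1 (x ^ q) :=
  min_le_min le_rfl (Real.rpow_le_rpow_of_nonpos hx hxy hq)

private lemma min_exp_mono {x : ℝ} (q r : ℝ) (hx : 0 ≤ x) (hq : 0 < q) (hqr : q ≤ r) :
    min 1 (x ^ (-r)) ≤ min 1 (x ^ (-q)) := by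
  rcases eq_or_lt_of_le hx with h | h
  · rw [← h, Real.zero_rpow (by linarith : -r ≠ 0)]
    exact le_trans (min_le_right _ _) (aux_min_nonneg le_rfl)
  rcases le_or_gt 1 x with h1 | h1
  · exact min_le_min le_rfl (Real.rpow_le_rpow_of_exponent_le h1 (by linarith))
  · have h2 : (1 : ℝ) ≤ x ^ (-q) :=
      Real.one_le_rpow_of_pos_of_le_one_of_nonpos h h1.le (by linarith)
    calc min 1 (x ^ (-r)) ≤ 1 := min_le_left _ _
      _ = min 1 (x ^ (-q)) := (min_eq_left h2).symm

private lemma min_one_mul_le {c x : ℝ} (hc : 1 ≤ c) (hx : 0 ≤ x) :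
    min 1 (c * x) ≤ c * min 1 x := by
  rcases le_total 1 x with h | h
  · rw [min_eq_left h, mul_one]
    exact le_trans (min_le_left _ _) hc
  · rw [min_eq_right h]
    exact min_le_right _ _

private lemma half_rpow {τ q : ℝ} (hτ : 0 ≤ τ) :
    (τ / 2) ^ (-q) = 2 ^ q * τ ^ (-q) := by
  rw [div_eq_mul_inv, Real.mul_rpow hτ (by norm_num), Real.inv_rpow (by norm_num),
    ← Real.rpow_neg (by norm_num), neg_neg, mul_comm]

private lemma intA {τ : ℝ} (hτ : 0 ≤ τ) :
    ∫ x in (0 : ℝ)..τ, min 1 (x ^ (-(3 / 2) : ℝ)) ≤ 3 := by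
  have hmeas : Measurable fun x : ℝ => min 1 (x ^ (-(3 / 2) : ℝ)) := by fun_prop
  by_cases h1 : τ ≤ 1
  · have hi : IntervalIntegrable (fun x : ℝ => min 1 (x ^ (-(3 / 2) : ℝ))) volume 0 τ :=
      aux_intervalIntegrable hτ hmeas (fun x hx => aux_abs_min_le hx.1.le)
    have := intervalIntegral.integral_mono_on hτ hi intervalIntegrable_const
      (fun x _ => min_le_left 1 (x ^ (-(3 / 2) : ℝ)))
    simp only [intervalIntegral.integral_const, smul_eq_mul, mul_one, sub_zero] at this
    linarith
  · push_neg at h1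
    have hi1 : IntervalIntegrable (fun x : ℝ => min 1 (x ^ (-(3 / 2) : ℝ))) volume 0 1 :=
      aux_intervalIntegrable zero_le_one hmeas (fun x hx => aux_abs_min_le hx.1.le)
    have hi2 : IntervalIntegrable (fun x : ℝ => min 1 (x ^ (-(3 / 2) : ℝ))) volume 1 τ :=
      aux_intervalIntegrable h1.le hmeas (fun x hx => aux_abs_min_le (by linarith [hx.1]))
    rw [← intervalIntegral.integral_add_adjacent_intervals hi1 hi2]
    have hb1 : ∫ x in (0 : ℝ)..1, min 1 (x ^ (-(3 / 2) : ℝ)) ≤ 1 := by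
      have := intervalIntegral.integral_mono_on zero_le_one hi1 intervalIntegrable_const
        (fun x _ => min_le_left 1 (x ^ (-(3 / 2) : ℝ)))
      simpa using this
    have h0mem : (0 : ℝ) ∉ Set.uIcc (1 : ℝ) τ := by
      rw [Set.uIcc_of_le h1.le]
      intro h; exact absurd h.1 (by norm_num)
    have hirp : IntervalIntegrable (fun x : ℝ => x ^ (-(3 / 2) : ℝ)) volume 1 τ :=
      intervalIntegral.intervalIntegrable_rpow (Or.inr h0mem)
    have hb2 : ∫ x in (1 : ℝ)..τ, min 1 (x ^ (-(3 / 2) : ℝ)) ≤ 2 := by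
      have hm := intervalIntegral.integral_mono_on h1.le hi2 hirp
        (fun x _ => min_le_right 1 (x ^ (-(3 / 2) : ℝ)))
      have hval : ∫ x in (1 : ℝ)..τ, x ^ (-(3 / 2) : ℝ)
          = (τ ^ ((-(3 / 2) : ℝ) + 1) - 1 ^ ((-(3 / 2) : ℝ) + 1)) / ((-(3 / 2) : ℝ) + 1) :=
        integral_rpow (Or.inr ⟨by norm_num, h0mem⟩)
      rw [hval] at hm
      have he : ((-(3 / 2) : ℝ) + 1) = -(1 / 2) := by norm_num
      rw [he, Real.one_rpow] at hm
      have hnn : 0 ≤ τ ^ (-(1 / 2) : ℝ) := Real.rpow_nonneg hτ _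
      calc ∫ x in (1 : ℝ)..τ, min 1 (x ^ (-(3 / 2) : ℝ))
          ≤ (τ ^ (-(1 / 2) : ℝ) - 1) / (-(1 / 2)) := hm
        _ = 2 - 2 * τ ^ (-(1 / 2) : ℝ) := by ring
        _ ≤ 2 := by linarith
    linarith

private lemma intB {τ : ℝ} (hτ : 0 ≤ τ) :
    ∫ x in (0 : ℝ)..τ, min 1 (x ^ (-(1 / 2) : ℝ)) ≤ 2 * τ ^ ((1 : ℝ) / 2) := by
  have hmeas : Measurable fun x : ℝ => min 1 (x ^ (-(1 / 2) : ℝ)) := by fun_prop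
  have hi : IntervalIntegrable (fun x : ℝ => min 1 (x ^ (-(1 / 2) : ℝ))) volume 0 τ :=
    aux_intervalIntegrable hτ hmeas (fun x hx => aux_abs_min_le hx.1.le)
  have hirp : IntervalIntegrable (fun x : ℝ => x ^ (-(1 / 2) : ℝ)) volume 0 τ :=
    intervalIntegral.intervalIntegrable_rpow' (by norm_num)
  have hm := intervalIntegral.integral_mono_on hτ hi hirp
    (fun x _ => min_le_right 1 (x ^ (-(1 / 2) : ℝ)))
  have hval : ∫ x in (0 : ℝ)..τ, x ^ (-(1 / 2) : ℝ)
      = (τ ^ ((-(1 / 2) : ℝ) + 1) - 0 ^ ((-(1 / 2) : ℝ) + 1)) / ((-(1 / 2) : ℝ) + 1) :=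
    integral_rpow (Or.inl (by norm_num))
  rw [hval] at hm
  have he : ((-(1 / 2) : ℝ) + 1) = (1 : ℝ) / 2 := by norm_num
  rw [he, Real.zero_rpow (by norm_num)] at hm
  calc ∫ x in (0 : ℝ)..τ, min 1 (x ^ (-(1 / 2) : ℝ))
      ≤ (τ ^ ((1 : ℝ) / 2) - 0) / (1 / 2) := hm
    _ = 2 * τ ^ ((1 : ℝ) / 2) := by ring

private lemma intB' {τ : ℝ} (hτ : 0 ≤ τ) :
    ∫ x in (0 : ℝ)..τ, min 1 (x ^ (-(1 / 2) : ℝ)) ≤ τ := by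
  have hmeas : Measurable fun x : ℝ => min 1 (x ^ (-(1 / 2) : ℝ)) := by fun_prop
  have hi : IntervalIntegrable (fun x : ℝ => min 1 (x ^ (-(1 / 2) : ℝ))) volume 0 τ :=
    aux_intervalIntegrable hτ hmeas (fun x hx => aux_abs_min_le hx.1.le)
  have := intervalIntegral.integral_mono_on hτ hi intervalIntegrable_const
    (fun x _ => min_le_left 1 (x ^ (-(1 / 2) : ℝ)))
  simpa using this

set_option maxHeartbeats 1000000 in
theorem stmt2 (d : ℕ) (hd : 3 ≤ d) :
    ∃ C > 0, ∀ K t : ℝ, 0 ≤ K → -K ≤ t →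
      (∫ s in Set.Ioc (-K) t,
          min 1 ((t - s) ^ (-(d : ℝ) / 2)) * min 1 ((s + K) ^ (-((d : ℝ) / 2 - 1))))
        ≤ C * min 1 ((t + K) ^ (-((d : ℝ) / 2 - 1))) := by
  have hd3 : (3 : ℝ) ≤ (d : ℝ) := by exact_mod_cast hd
  refine ⟨2 ^ ((d : ℝ) + 3), Real.rpow_pos_of_pos two_pos _, ?_⟩
  intro K t hK ht
  simp only [neg_div]
  set a : ℝ := (d : ℝ) / 2 - 1 with ha
  set p : ℝ := (d : ℝ) / 2 with hp
  have hap : a ≤ p := by rw [ha, hp]; linarith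
  have hahalf : (1 : ℝ) / 2 ≤ a := by rw [ha]; linarith
  have hp32 : (3 : ℝ) / 2 ≤ p := by rw [hp]; linarith
  set τ : ℝ := t + K with hτ
  have hτ0 : 0 ≤ τ := by rw [hτ]; linarith
  rcases eq_or_lt_of_le hτ0 with h0 | hτpos
  · -- degenerate case τ = 0
    have hte : t = -K := by rw [hτ] at h0; linarith
    have hempty : Set.Ioc (-K) t = ∅ := by rw [hte, Set.Ioc_self]
    rw [hempty]
    have : τ ^ (-a) = 0 := by
      rw [← h0, Real.zero_rpow (by linarith : -a ≠ 0)]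
    rw [this]
    simp
  -- main case: τ > 0
  set c₁ : ℝ := min 1 ((τ / 2) ^ (-a)) with hc₁
  set c₂ : ℝ := min 1 ((τ / 2) ^ (-p)) with hc₂
  have hτ2 : 0 < τ / 2 := by linarith
  have hc₁0 : 0 ≤ c₁ := aux_min_nonneg hτ2.le
  have hc₂0 : 0 ≤ c₂ := aux_min_nonneg hτ2.le
  have hc₂1 : c₂ ≤ 1 := min_le_left _ _
  set F₁ : ℝ → ℝ := fun s => min 1 ((t - s) ^ (-(3 / 2) : ℝ)) with hF₁
  set F₂ : ℝ → ℝ := fun s => min 1 ((s + K) ^ (-(1 / 2) : ℝ)) with hF₂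
  -- pointwise bound
  have hpt : ∀ s ∈ Set.Ioc (-K) t,
      min 1 ((t - s) ^ (-p)) * min 1 ((s + K) ^ (-a))
        ≤ c₁ * F₁ s + c₂ * F₂ s := by
    intro s hs
    obtain ⟨hs1, hs2⟩ := hs
    have hu : 0 ≤ t - s := by linarith
    have hv : 0 < s + K := by linarith
    by_cases hcase : τ / 2 ≤ t - s
    · have h1 : min 1 ((t - s) ^ (-p)) ≤ c₂ :=
        min_base_mono hτ2 hcase (by rw [hp]; linarith : -p ≤ 0)
      have h2 : min 1 ((s + K) ^ (-a)) ≤ F₂ s :=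
        min_exp_mono (1 / 2) a hv.le (by norm_num) hahalf
      have : min 1 ((t - s) ^ (-p)) * min 1 ((s + K) ^ (-a)) ≤ c₂ * F₂ s :=
        mul_le_mul h1 h2 (aux_min_nonneg hv.le) hc₂0
      have hpos : 0 ≤ c₁ * F₁ s := mul_nonneg hc₁0 (aux_min_nonneg hu)
      linarith
    · push_neg at hcase
      have hvlarge : τ / 2 ≤ s + K := by rw [hτ] at *; linarith
      have h1 : min 1 ((t - s) ^ (-p)) ≤ F₁ s :=
        min_exp_mono (3 / 2) p hu (by norm_num) hp32
      have h2 : min 1 ((s + K) ^ (-a)) ≤ c₁ :=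
        min_base_mono hτ2 hvlarge (by linarith : -a ≤ 0)
      have : min 1 ((t - s) ^ (-p)) * min 1 ((s + K) ^ (-a)) ≤ F₁ s * c₁ :=
        mul_le_mul h1 h2 (aux_min_nonneg hv.le) (aux_min_nonneg hu)
      have hpos : 0 ≤ c₂ * F₂ s := mul_nonneg hc₂0 (aux_min_nonneg hv.le)
      nlinarith
  -- integrability
  have hmf : Measurable fun s : ℝ => min 1 ((t - s) ^ (-p)) * min 1 ((s + K) ^ (-a)) := by
    fun_prop
  have hintf : IntegrableOn
      (fun s : ℝ => min 1 ((t - s) ^ (-p)) * min 1 ((s + K) ^ (-a)))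
      (Set.Ioc (-K) t) := by
    refine aux_integrableOn hmf (fun x hx => ?_)
    have h1 : 0 ≤ t - x := by linarith [hx.2]
    have h2 : 0 ≤ x + K := by linarith [hx.1]
    have a1 := aux_min_nonneg (q := -p) h1
    have a2 := aux_min_nonneg (q := -a) h2
    have b1 : min 1 ((t - x) ^ (-p)) ≤ 1 := min_le_left _ _
    have b2 : min 1 ((x + K) ^ (-a)) ≤ 1 := min_le_left _ _
    rw [abs_le]
    constructor <;> nlinarith
  have hmF₁ : Measurable F₁ := by rw [hF₁]; fun_prop
  have hmF₂ : Measurable F₂ := by rw [hF₂]; fun_prop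
  have hintF₁ : IntegrableOn F₁ (Set.Ioc (-K) t) :=
    aux_integrableOn hmF₁ (fun x hx => aux_abs_min_le (by linarith [hx.2] : (0:ℝ) ≤ t - x))
  have hintF₂ : IntegrableOn F₂ (Set.Ioc (-K) t) :=
    aux_integrableOn hmF₂ (fun x hx => aux_abs_min_le (by linarith [hx.1] : (0:ℝ) ≤ x + K))
  have hintg : IntegrableOn (fun s => c₁ * F₁ s + c₂ * F₂ s) (Set.Ioc (-K) t) :=
    (hintF₁.const_mul c₁).add (hintF₂.const_mul c₂)
  -- compare integrals
  have hstep1 : (∫ s in Set.Ioc (-K) t,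
        min 1 ((t - s) ^ (-p)) * min 1 ((s + K) ^ (-a)))
      ≤ ∫ s in Set.Ioc (-K) t, (c₁ * F₁ s + c₂ * F₂ s) :=
    setIntegral_mono_on hintf hintg measurableSet_Ioc hpt
  have hstep2 : (∫ s in Set.Ioc (-K) t, (c₁ * F₁ s + c₂ * F₂ s))
      = c₁ * (∫ s in Set.Ioc (-K) t, F₁ s) + c₂ * (∫ s in Set.Ioc (-K) t, F₂ s) := by
    rw [integral_add (hintF₁.const_mul c₁) (hintF₂.const_mul c₂),
      integral_const_mul, integral_const_mul]
  -- compute/bound the two integrals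
  have hJ₁ : (∫ s in Set.Ioc (-K) t, F₁ s) ≤ 3 := by
    rw [← intervalIntegral.integral_of_le ht]
    have hc := intervalIntegral.integral_comp_sub_left (a := -K) (b := t)
      (fun x => min 1 (x ^ (-(3 / 2) : ℝ))) t
    rw [hF₁]
    simp only [sub_self, sub_neg_eq_add] at hc
    rw [hc]
    exact intA hτ0
  have hJ₂s : (∫ s in Set.Ioc (-K) t, F₂ s) ≤ 2 * τ ^ ((1 : ℝ) / 2) := by
    rw [← intervalIntegral.integral_of_le ht]
    have hc := intervalIntegral.integral_comp_add_right (a := -K) (b := t)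
      (fun x => min 1 (x ^ (-(1 / 2) : ℝ))) K
    rw [hF₂]
    simp only [neg_add_cancel] at hc
    rw [hc]
    exact intB hτ0
  have hJ₂τ : (∫ s in Set.Ioc (-K) t, F₂ s) ≤ τ := by
    rw [← intervalIntegral.integral_of_le ht]
    have hc := intervalIntegral.integral_comp_add_right (a := -K) (b := t)
      (fun x => min 1 (x ^ (-(1 / 2) : ℝ))) K
    rw [hF₂]
    simp only [neg_add_cancel] at hc
    rw [hc]
    exact intB' hτ0
  have hJ₁0 : 0 ≤ ∫ s in Set.Ioc (-K) t, F₁ s :=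
    setIntegral_nonneg measurableSet_Ioc
      (fun x hx => aux_min_nonneg (by linarith [hx.2] : (0:ℝ) ≤ t - x))
  have hJ₂0 : 0 ≤ ∫ s in Set.Ioc (-K) t, F₂ s :=
    setIntegral_nonneg measurableSet_Ioc
      (fun x hx => aux_min_nonneg (by linarith [hx.1] : (0:ℝ) ≤ x + K))
  -- final arithmetic
  set m : ℝ := min 1 (τ ^ (-a)) with hm
  have hm0 : 0 ≤ m := aux_min_nonneg hτ0
  have h2a1 : (1 : ℝ) ≤ 2 ^ a := by
    calc (1 : ℝ) = 2 ^ (0 : ℝ) := (Real.rpow_zero 2).symm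
      _ ≤ 2 ^ a := Real.rpow_le_rpow_of_exponent_le one_le_two (by linarith)
  have hc₁m : c₁ ≤ 2 ^ a * m := by
    rw [hc₁, half_rpow hτ0]
    exact min_one_mul_le h2a1 (Real.rpow_nonneg hτ0 _)
  have hterm1 : c₁ * (∫ s in Set.Ioc (-K) t, F₁ s) ≤ 2 ^ a * m * 3 :=
    mul_le_mul hc₁m hJ₁ hJ₁0 (by positivity)
  have h2p1 : (1 : ℝ) ≤ 2 ^ (p + 1) := by
    calc (1 : ℝ) = 2 ^ (0 : ℝ) := (Real.rpow_zero 2).symm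
      _ ≤ 2 ^ (p + 1) := Real.rpow_le_rpow_of_exponent_le one_le_two (by linarith)
  have hterm2 : c₂ * (∫ s in Set.Ioc (-K) t, F₂ s) ≤ 2 ^ (p + 1) * m := by
    by_cases h1 : τ ≤ 1
    · have hm1 : m = 1 := by
        rw [hm]
        exact min_eq_left (Real.one_le_rpow_of_pos_of_le_one_of_nonpos hτpos h1
          (by linarith : -a ≤ 0))
      have : c₂ * (∫ s in Set.Ioc (-K) t, F₂ s) ≤ 1 * τ :=
        mul_le_mul hc₂1 hJ₂τ hJ₂0 zero_le_one
      rw [hm1, mul_one]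
      calc c₂ * (∫ s in Set.Ioc (-K) t, F₂ s) ≤ 1 * τ := this
        _ = τ := one_mul τ
        _ ≤ 1 := h1
        _ ≤ 2 ^ (p + 1) := h2p1
    · push_neg at h1
      have hm1 : m = τ ^ (-a) := by
        rw [hm]
        exact min_eq_right (Real.rpow_le_one_of_one_le_of_nonpos h1.le (by linarith : -a ≤ 0))
      have hc₂b : c₂ ≤ 2 ^ p * τ ^ (-p) := by
        rw [hc₂, half_rpow hτ0]
        exact min_le_right _ _
      have hmul : c₂ * (∫ s in Set.Ioc (-K) t, F₂ s)
          ≤ (2 ^ p * τ ^ (-p)) * (2 * τ ^ ((1 : ℝ) / 2)) :=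
        mul_le_mul hc₂b hJ₂s hJ₂0 (by positivity)
      have hcollect : (2 ^ p * τ ^ (-p)) * (2 * τ ^ ((1 : ℝ) / 2))
          = 2 ^ (p + 1) * τ ^ (-p + (1 : ℝ) / 2) := by
        rw [Real.rpow_add_one (by norm_num : (2:ℝ) ≠ 0), Real.rpow_add hτpos]
        ring
      have hexp : τ ^ (-p + (1 : ℝ) / 2) ≤ τ ^ (-a) :=
        Real.rpow_le_rpow_of_exponent_le h1.le (by rw [ha, hp]; linarith)
      calc c₂ * (∫ s in Set.Ioc (-K) t, F₂ s)
          ≤ (2 ^ p * τ ^ (-p)) * (2 * τ ^ ((1 : ℝ) / 2)) := hmul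
        _ = 2 ^ (p + 1) * τ ^ (-p + (1 : ℝ) / 2) := hcollect
        _ ≤ 2 ^ (p + 1) * τ ^ (-a) :=
            mul_le_mul_of_nonneg_left hexp (by positivity)
        _ = 2 ^ (p + 1) * m := by rw [hm1]
  -- assemble constant
  have hCbound : (2 : ℝ) ^ a * 3 + (2 : ℝ) ^ (p + 1) ≤ (2 : ℝ) ^ ((d : ℝ) + 3) := by
    have e1 : (2 : ℝ) ^ a ≤ (2 : ℝ) ^ ((d : ℝ)) :=
      Real.rpow_le_rpow_of_exponent_le one_le_two (by rw [ha, hp]; linarith)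
    have e2 : (2 : ℝ) ^ (p + 1) ≤ (2 : ℝ) ^ ((d : ℝ) + 1) :=
      Real.rpow_le_rpow_of_exponent_le one_le_two (by rw [hp]; linarith)
    have e3 : (2 : ℝ) ^ ((d : ℝ) + 1) = (2 : ℝ) ^ ((d : ℝ)) * 2 :=
      Real.rpow_add_one (by norm_num) _
    have e38 : (2 : ℝ) ^ (3 : ℝ) = 8 := by
      rw [show (3 : ℝ) = ((3 : ℕ) : ℝ) by norm_num, Real.rpow_natCast]
      norm_num
    have e4 : (2 : ℝ) ^ ((d : ℝ) + 3) = (2 : ℝ) ^ ((d : ℝ)) * 8 := by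
      rw [Real.rpow_add (by norm_num : (0:ℝ) < 2), e38]
    have e5 : (0 : ℝ) ≤ (2 : ℝ) ^ ((d : ℝ)) := Real.rpow_nonneg (by norm_num) _
    linarith
  calc (∫ s in Set.Ioc (-K) t,
        min 1 ((t - s) ^ (-p)) * min 1 ((s + K) ^ (-a)))
      ≤ c₁ * (∫ s in Set.Ioc (-K) t, F₁ s) + c₂ * (∫ s in Set.Ioc (-K) t, F₂ s) := by
        rw [← hstep2]; exact hstep1
    _ ≤ 2 ^ a * m * 3 + 2 ^ (p + 1) * m := add_le_add hterm1 hterm2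
    _ = (2 ^ a * 3 + 2 ^ (p + 1)) * m := by ring
    _ ≤ 2 ^ ((d : ℝ) + 3) * m := mul_le_mul_of_nonneg_right hCbound hm0
end

section
/- Let d ≥ 1 and let p(t,x) be the heat kernel on ℝ^d. For any δ ∈ (0,1) there exists a constant C > 0 such that for all t > 0, y, x₁, x₂ ∈ ℝ^d: |p(t, x₁ - y) - p(t, x₂ - y)| ≤ C t^{-δ/2} (p(2t, x₁ - y) + p(2t, x₂ - y)) |x₁ - x₂|^δ. -/
open MeasureTheory Real Set

noncomputable def heatKernel (d : ℕ) (t : ℝ) (x : EuclideanSpace ℝ (Fin d)) : ℝ :=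
  (4 * Real.pi * t) ^ (-(d : ℝ) / 2) * Real.exp (-‖x‖ ^ 2 / (4 * t))

private lemma aux_exp (A B : ℝ) :
    |Real.exp (-A) - Real.exp (-B)| ≤ |A - B| * (Real.exp (-A) + Real.exp (-B)) := by
  wlog h : A ≤ B generalizing A B
  · rw [abs_sub_comm, abs_sub_comm A B, add_comm]
    exact this B A (le_of_not_ge h)
  have h1 : Real.exp (-B) ≤ Real.exp (-A) := Real.exp_le_exp.2 (by linarith)
  have h2 : Real.exp (-B) = Real.exp (-A) * Real.exp (A - B) := by
    rw [← Real.exp_add]; ring_nf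
  rw [abs_of_nonneg (by linarith), abs_of_nonpos (by linarith)]
  nlinarith [Real.add_one_le_exp (A - B), Real.exp_pos (-A), Real.exp_pos (-B),
    mul_le_mul_of_nonneg_left (Real.add_one_le_exp (A - B)) (Real.exp_pos (-A)).le]

private lemma aux_gauss (r st : ℝ) (hr : 0 ≤ r) (hst : 0 < st) :
    (2 * r + st) * Real.exp (-(r ^ 2 / (8 * (st * st)))) ≤ 10 * st := by
  rcases le_or_gt r (2 * st) with h | h
  · have h1 : Real.exp (-(r ^ 2 / (8 * (st * st)))) ≤ 1 := by
      rw [Real.exp_le_one_iff]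
      have : 0 ≤ r ^ 2 / (8 * (st * st)) := by positivity
      linarith
    nlinarith [Real.exp_pos (-(r ^ 2 / (8 * (st * st))))]
  · have hr0 : 0 < r := by linarith
    have hxpos : 0 < r ^ 2 / (8 * (st * st)) := by positivity
    have hexp : r ^ 2 / (8 * (st * st)) ≤ Real.exp (r ^ 2 / (8 * (st * st))) := by
      have := Real.add_one_le_exp (r ^ 2 / (8 * (st * st))); linarith
    have hx : Real.exp (-(r ^ 2 / (8 * (st * st)))) ≤ 8 * (st * st) / r ^ 2 := by
      rw [Real.exp_neg, show 8 * (st * st) / r ^ 2 = (r ^ 2 / (8 * (st * st)))⁻¹ by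
        rw [inv_div]]
      exact inv_anti₀ hxpos hexp
    calc (2 * r + st) * Real.exp (-(r ^ 2 / (8 * (st * st))))
        ≤ (2 * r + st) * (8 * (st * st) / r ^ 2) :=
          mul_le_mul_of_nonneg_left hx (by positivity)
      _ ≤ 10 * st := by
          rw [mul_div_assoc', div_le_iff₀ (by positivity : (0:ℝ) < r ^ 2)]
          nlinarith [mul_nonneg (mul_nonneg hst.le (sub_nonneg.2 h.le))
            (by positivity : (0:ℝ) ≤ 10 * r + 4 * st)]

private lemma aux_gauss2 (r t : ℝ) (hr : 0 ≤ r) (ht : 0 < t) :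
    (2 * r + Real.sqrt t) * Real.exp (-(r ^ 2 / (4 * t))) ≤
      10 * Real.sqrt t * Real.exp (-(r ^ 2 / (8 * t))) := by
  have hst := Real.sqrt_pos.2 ht
  have hmul : Real.sqrt t * Real.sqrt t = t := Real.mul_self_sqrt ht.le
  have hsplit : Real.exp (-(r ^ 2 / (4 * t))) =
      Real.exp (-(r ^ 2 / (8 * t))) * Real.exp (-(r ^ 2 / (8 * t))) := by
    rw [← Real.exp_add]; congr 1; field_simp; ring
  rw [hsplit, ← mul_assoc]
  apply mul_le_mul_of_nonneg_right _ (Real.exp_nonneg _)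
  have h := aux_gauss r (Real.sqrt t) hr hst
  rw [hmul] at h
  exact h

private lemma aux_scale (d : ℕ) (t : ℝ) (ht : 0 < t) :
    (4 * Real.pi * t) ^ (-(d : ℝ) / 2) =
      2 ^ ((d : ℝ) / 2) * (4 * Real.pi * (2 * t)) ^ (-(d : ℝ) / 2) := by
  have hπ := Real.pi_pos
  conv_rhs => rw [show 4 * Real.pi * (2 * t) = 2 * (4 * Real.pi * t) by ring,
    Real.mul_rpow (by norm_num : (0:ℝ) ≤ 2) (by positivity)]
  rw [← mul_assoc, ← Real.rpow_add (by norm_num : (0:ℝ) < 2),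
    show (d : ℝ) / 2 + -(d : ℝ) / 2 = 0 by ring, Real.rpow_zero, one_mul]

private lemma aux_hold (s t δ : ℝ) (hs : 0 ≤ s) (ht : 0 < t) (hst : s ≤ Real.sqrt t)
    (hδ0 : 0 < δ) (hδ1 : δ < 1) :
    s * Real.sqrt t / t ≤ t ^ (-δ / 2) * s ^ δ := by
  have hr : 0 < Real.sqrt t := Real.sqrt_pos.2 ht
  have hmul : Real.sqrt t * Real.sqrt t = t := Real.mul_self_sqrt ht.le
  have h1 : s * Real.sqrt t / t = s / Real.sqrt t := by
    rw [div_eq_div_iff ht.ne' hr.ne', mul_assoc, hmul]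
  have h2 : t ^ (-δ / 2) = Real.sqrt t ^ (-δ) := by
    rw [Real.sqrt_eq_rpow, ← Real.rpow_mul ht.le]
    congr 1; ring
  rw [h1, h2, div_le_iff₀ hr]
  have h4 : Real.sqrt t ^ (-δ) * s ^ δ * Real.sqrt t = s ^ δ * Real.sqrt t ^ (1 - δ) := by
    rw [show (1:ℝ) - δ = -δ + 1 by ring, Real.rpow_add hr, Real.rpow_one]; ring
  rw [h4]
  have h5 : s ^ δ * s ^ (1 - δ) = s := by
    rw [← Real.rpow_add' hs (by norm_num : δ + (1 - δ) ≠ 0)]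
    norm_num
  calc s = s ^ δ * s ^ (1 - δ) := h5.symm
    _ ≤ s ^ δ * Real.sqrt t ^ (1 - δ) := by
        apply mul_le_mul_of_nonneg_left (Real.rpow_le_rpow hs hst (by linarith))
        positivity

private lemma aux_one (s t δ : ℝ) (ht : 0 < t) (hst : Real.sqrt t ≤ s)
    (hδ0 : 0 < δ) : 1 ≤ t ^ (-δ / 2) * s ^ δ := by
  have h2 : t ^ (δ / 2) = Real.sqrt t ^ δ := by
    rw [Real.sqrt_eq_rpow, ← Real.rpow_mul ht.le]
    congr 1; ring
  have h3 : t ^ (δ / 2) ≤ s ^ δ := by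
    rw [h2]; exact Real.rpow_le_rpow (Real.sqrt_nonneg t) hst hδ0.le
  calc (1:ℝ) = t ^ (-δ / 2) * t ^ (δ / 2) := by
        rw [← Real.rpow_add ht, show -δ / 2 + δ / 2 = 0 by ring, Real.rpow_zero]
    _ ≤ t ^ (-δ / 2) * s ^ δ := by
        apply mul_le_mul_of_nonneg_left h3 (by positivity)

private lemma hk_eq (d : ℕ) (t : ℝ) (x : EuclideanSpace ℝ (Fin d)) :
    heatKernel d t x =
      (4 * Real.pi * t) ^ (-(d : ℝ) / 2) * Real.exp (-(‖x‖ ^ 2 / (4 * t))) := by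
  unfold heatKernel
  rw [neg_div (4 * t) (‖x‖ ^ 2)]

private lemma hk2_eq (d : ℕ) (t : ℝ) (x : EuclideanSpace ℝ (Fin d)) :
    heatKernel d (2 * t) x =
      (4 * Real.pi * (2 * t)) ^ (-(d : ℝ) / 2) * Real.exp (-(‖x‖ ^ 2 / (8 * t))) := by
  unfold heatKernel
  rw [show 4 * (2 * t) = 8 * t by ring, neg_div (8 * t) (‖x‖ ^ 2)]

private lemma main_est (d : ℕ) (δ t na nb s : ℝ) (ht : 0 < t) (hδ0 : 0 < δ) (hδ1 : δ < 1)
    (hna : 0 ≤ na) (hnb : 0 ≤ nb) (hs : 0 ≤ s) (h1 : |na - nb| ≤ s) :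
    |(4 * Real.pi * t) ^ (-(d : ℝ) / 2) * Real.exp (-(na ^ 2 / (4 * t))) -
        (4 * Real.pi * t) ^ (-(d : ℝ) / 2) * Real.exp (-(nb ^ 2 / (4 * t)))| ≤
      16 * 2 ^ ((d : ℝ) / 2) * t ^ (-δ / 2) *
        ((4 * Real.pi * (2 * t)) ^ (-(d : ℝ) / 2) * Real.exp (-(na ^ 2 / (8 * t))) +
          (4 * Real.pi * (2 * t)) ^ (-(d : ℝ) / 2) * Real.exp (-(nb ^ 2 / (8 * t)))) *
        s ^ δ := by
  have hπ := Real.pi_pos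
  have hKE := aux_scale d t ht
  set E : ℝ := 2 ^ ((d : ℝ) / 2) with hE
  set K : ℝ := (4 * Real.pi * t) ^ (-(d : ℝ) / 2) with hK
  set K2 : ℝ := (4 * Real.pi * (2 * t)) ^ (-(d : ℝ) / 2) with hK2
  have hE0 : 0 < E := by rw [hE]; positivity
  have hK0 : 0 < K := by rw [hK]; positivity
  have hK20 : 0 < K2 := by rw [hK2]; positivity
  set eA : ℝ := Real.exp (-(na ^ 2 / (4 * t))) with heA
  set eB : ℝ := Real.exp (-(nb ^ 2 / (4 * t))) with heB
  set e8a : ℝ := Real.exp (-(na ^ 2 / (8 * t))) with he8a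
  set e8b : ℝ := Real.exp (-(nb ^ 2 / (8 * t))) with he8b
  have heA0 : 0 ≤ eA := Real.exp_nonneg _
  have heB0 : 0 ≤ eB := Real.exp_nonneg _
  have he8a0 : 0 ≤ e8a := Real.exp_nonneg _
  have he8b0 : 0 ≤ e8b := Real.exp_nonneg _
  have htpos : 0 ≤ t ^ (-δ / 2) := by positivity
  have hsδ : 0 ≤ s ^ δ := by positivity
  have hea8 : eA ≤ e8a := by
    rw [heA, he8a]
    apply Real.exp_le_exp.2
    apply neg_le_neg
    gcongr <;> norm_num
  have heb8 : eB ≤ e8b := by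
    rw [heB, he8b]
    apply Real.exp_le_exp.2
    apply neg_le_neg
    gcongr <;> norm_num
  rcases le_total (Real.sqrt t) s with hcase | hcase
  · -- trivial case
    have hone : 1 ≤ t ^ (-δ / 2) * s ^ δ := aux_one s t δ ht hcase hδ0
    have habs : |K * eA - K * eB| ≤ E * (K2 * e8a + K2 * e8b) := by
      rw [abs_sub_le_iff]
      have h2 : K * eA ≤ E * (K2 * e8a) := by
        rw [hKE, mul_assoc]
        apply mul_le_mul_of_nonneg_left _ hE0.le
        exact mul_le_mul_of_nonneg_left hea8 hK20.le
      have h3 : K * eB ≤ E * (K2 * e8b) := by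
        rw [hKE, mul_assoc]
        apply mul_le_mul_of_nonneg_left _ hE0.le
        exact mul_le_mul_of_nonneg_left heb8 hK20.le
      have h4 : 0 ≤ K * eA := by positivity
      have h5 : 0 ≤ K * eB := by positivity
      have h6 : 0 ≤ E * (K2 * e8a) := by positivity
      have h7 : 0 ≤ E * (K2 * e8b) := by positivity
      constructor <;> nlinarith
    calc |K * eA - K * eB| ≤ E * (K2 * e8a + K2 * e8b) := habs
      _ = E * (K2 * e8a + K2 * e8b) * 1 := (mul_one _).symm
      _ ≤ E * (K2 * e8a + K2 * e8b) * (t ^ (-δ / 2) * s ^ δ) := by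
          apply mul_le_mul_of_nonneg_left hone (by positivity)
      _ = E * (t ^ (-δ / 2) * (K2 * e8a + K2 * e8b) * s ^ δ) := by ring
      _ ≤ 16 * (E * (t ^ (-δ / 2) * (K2 * e8a + K2 * e8b) * s ^ δ)) := by
          have h0 : 0 ≤ E * (t ^ (-δ / 2) * (K2 * e8a + K2 * e8b) * s ^ δ) := by positivity
          linarith
      _ = 16 * E * t ^ (-δ / 2) * (K2 * e8a + K2 * e8b) * s ^ δ := by ring
  · -- Hölder case
    have hst0 : 0 < Real.sqrt t := Real.sqrt_pos.2 ht
    have h1' := abs_le.1 h1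
    have hba : nb ≤ na + Real.sqrt t := by linarith
    have hab' : na ≤ nb + Real.sqrt t := by linarith
    have hAB : |na ^ 2 / (4 * t) - nb ^ 2 / (4 * t)| ≤ s * (na + nb) / (4 * t) := by
      rw [div_sub_div_same, abs_div, abs_of_pos (by linarith : (0:ℝ) < 4 * t)]
      gcongr
      rw [show na ^ 2 - nb ^ 2 = (na - nb) * (na + nb) by ring, abs_mul,
        abs_of_nonneg (by linarith : (0:ℝ) ≤ na + nb)]
      exact mul_le_mul_of_nonneg_right h1 (by linarith)
    calc |K * eA - K * eB| = K * |Real.exp (-(na ^ 2 / (4 * t))) - Real.exp (-(nb ^ 2 / (4 * t)))| := by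
          rw [← heA, ← heB, ← mul_sub, abs_mul, abs_of_pos hK0]
      _ ≤ K * (|na ^ 2 / (4 * t) - nb ^ 2 / (4 * t)| * (eA + eB)) := by
          apply mul_le_mul_of_nonneg_left _ hK0.le
          have := aux_exp (na ^ 2 / (4 * t)) (nb ^ 2 / (4 * t))
          rw [← heA, ← heB] at this
          exact this
      _ ≤ K * ((s * (na + nb) / (4 * t)) * (eA + eB)) := by
          apply mul_le_mul_of_nonneg_left _ hK0.le
          exact mul_le_mul_of_nonneg_right hAB (by linarith)
      _ = K * ((s / (4 * t)) * ((na + nb) * eA + (na + nb) * eB)) := by ring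
      _ ≤ K * ((s / (4 * t)) * ((2 * na + Real.sqrt t) * eA + (2 * nb + Real.sqrt t) * eB)) := by
          apply mul_le_mul_of_nonneg_left _ hK0.le
          apply mul_le_mul_of_nonneg_left _ (by positivity)
          apply add_le_add
          · exact mul_le_mul_of_nonneg_right (by linarith) heA0
          · exact mul_le_mul_of_nonneg_right (by linarith) heB0
      _ ≤ K * ((s / (4 * t)) * (10 * Real.sqrt t * e8a + 10 * Real.sqrt t * e8b)) := by
          apply mul_le_mul_of_nonneg_left _ hK0.le
          apply mul_le_mul_of_nonneg_left _ (by positivity)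
          exact add_le_add (aux_gauss2 na t hna ht) (aux_gauss2 nb t hnb ht)
      _ = (s * Real.sqrt t / t) * ((10 / 4) * (K * e8a + K * e8b)) := by ring
      _ ≤ (t ^ (-δ / 2) * s ^ δ) * ((10 / 4) * (K * e8a + K * e8b)) := by
          apply mul_le_mul_of_nonneg_right (aux_hold s t δ hs ht hcase hδ0 hδ1)
          positivity
      _ = (10 / 4) * (E * (t ^ (-δ / 2) * (K2 * e8a + K2 * e8b) * s ^ δ)) := by
          rw [hKE]; ring
      _ ≤ 16 * (E * (t ^ (-δ / 2) * (K2 * e8a + K2 * e8b) * s ^ δ)) := by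
          have h0 : 0 ≤ E * (t ^ (-δ / 2) * (K2 * e8a + K2 * e8b) * s ^ δ) := by positivity
          linarith
      _ = 16 * E * t ^ (-δ / 2) * (K2 * e8a + K2 * e8b) * s ^ δ := by ring

theorem stmt5 (d : ℕ) (hd : 1 ≤ d) (δ : ℝ) (hδ : δ ∈ Set.Ioo (0 : ℝ) 1) :
    ∃ C > 0, ∀ t : ℝ, 0 < t → ∀ y x₁ x₂ : EuclideanSpace ℝ (Fin d),
      |heatKernel d t (x₁ - y) - heatKernel d t (x₂ - y)| ≤
        C * t ^ (-δ / 2) *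
          (heatKernel d (2 * t) (x₁ - y) + heatKernel d (2 * t) (x₂ - y)) *
          ‖x₁ - x₂‖ ^ δ := by
  obtain ⟨hδ0, hδ1⟩ := hδ
  have hπ := Real.pi_pos
  refine ⟨16 * 2 ^ ((d : ℝ) / 2), by positivity, ?_⟩
  intro t ht y x₁ x₂
  have hab : x₁ - y - (x₂ - y) = x₁ - x₂ := by abel
  have h1 : |‖x₁ - y‖ - ‖x₂ - y‖| ≤ ‖x₁ - x₂‖ := by
    rw [← hab]
    exact abs_norm_sub_norm_le _ _
  rw [hk_eq, hk_eq, hk2_eq, hk2_eq]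
  exact main_est d δ t ‖x₁ - y‖ ‖x₂ - y‖ ‖x₁ - x₂‖ ht hδ0 hδ1
    (norm_nonneg _) (norm_nonneg _) (norm_nonneg _) h1
end

section
/- Let d ≥ 3 and k(s) = min(1, s^{-d/2}) for s > 0. For K ≥ 0, t > -K, and n ≥ 1, define the iterated integral I_n(t) = ∫_{-K < s_n < ... < s_1 < t} (∏_{j=0}^{n-1} k(s_j - s_{j+1})) · min(1, (s_n + K)^{-(d/2-1)}) ds_n ... ds_1 (with s₀ = t). Then there exists a constant C > 0 depending only on d such that I_n(t) ≤ C^n · min(1, (t+K)^{-(d/2-1)}) for all n, t, K. -/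
open MeasureTheory Real Set

private lemma minmul_meas (t K a b : ℝ) :
    Measurable fun s : ℝ => min 1 ((t - s) ^ a) * min 1 ((s + K) ^ b) := by
  have h1 : Measurable fun s : ℝ => t - s := measurable_const.sub measurable_id
  have h2 : Measurable fun s : ℝ => s + K := measurable_id.add_const K
  exact (measurable_const.min (h1.pow_const a)).mul (measurable_const.min (h2.pow_const b))

private lemma intOn_of_bdd {f : ℝ → ℝ} {s : Set ℝ} (hm : Measurable f)
    (hs : MeasurableSet s) (hvol : volume s ≠ ⊤) {M : ℝ} (hb : ∀ x ∈ s, |f x| ≤ M) :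
    IntegrableOn f s := by
  refine Integrable.mono' (g := fun _ => M) (integrableOn_const hvol)
    hm.aestronglyMeasurable ?_
  exact (ae_restrict_iff' hs).2 (ae_of_all _ hb)

private lemma vol_Ioc_ne_top (a b : ℝ) : volume (Ioc a b) ≠ ⊤ := by
  rw [Real.volume_Ioc]; exact ENNReal.ofReal_ne_top

private lemma tail_lemma (a : ℝ) (ha : 1 < a) (T : ℝ) :
    ∫ v in Ioc (0:ℝ) T, min 1 (v ^ (-a)) ≤ 1 + 1 / (a - 1) := by
  have hmeas : Measurable fun v : ℝ => min 1 (v ^ (-a)) :=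
    measurable_const.min (measurable_id.pow_const (-a))
  have hb01 : ∀ v : ℝ, 0 < v → 0 ≤ min 1 (v ^ (-a)) ∧ min 1 (v ^ (-a)) ≤ 1 := by
    intro v hv
    exact ⟨le_min zero_le_one (Real.rpow_nonneg hv.le _), min_le_left _ _⟩
  have hinv : 0 ≤ 1 / (a - 1) := div_nonneg zero_le_one (by linarith)
  rcases le_or_gt T 1 with hT | hT
  · have h1 : ∫ v in Ioc (0:ℝ) T, min 1 (v ^ (-a)) ≤ ∫ _v in Ioc (0:ℝ) T, (1:ℝ) := by
      refine setIntegral_mono_on ?_ ?_ measurableSet_Ioc ?_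
      · exact intOn_of_bdd hmeas measurableSet_Ioc (vol_Ioc_ne_top _ _)
          (fun v hv => by rw [abs_of_nonneg (hb01 v hv.1).1]; exact (hb01 v hv.1).2)
      · exact integrableOn_const (vol_Ioc_ne_top _ _)
      · exact fun v hv => (hb01 v hv.1).2
    have h2 : ∫ _v in Ioc (0:ℝ) T, (1:ℝ) = max (T - 0) 0 := by
      rw [setIntegral_const, Real.volume_real_Ioc, smul_eq_mul, mul_one]
    have h3 : max (T - 0) 0 ≤ 1 := by
      simp only [sub_zero]; exact max_le hT zero_le_one
    linarith
  · have hsplit : Ioc (0:ℝ) T = Ioc 0 1 ∪ Ioc 1 T :=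
      (Ioc_union_Ioc_eq_Ioc zero_le_one hT.le).symm
    have hi1 : IntegrableOn (fun v : ℝ => min 1 (v ^ (-a))) (Ioc 0 1) :=
      intOn_of_bdd hmeas measurableSet_Ioc (vol_Ioc_ne_top _ _)
        (fun v hv => by rw [abs_of_nonneg (hb01 v hv.1).1]; exact (hb01 v hv.1).2)
    have hi2 : IntegrableOn (fun v : ℝ => min 1 (v ^ (-a))) (Ioc 1 T) :=
      intOn_of_bdd hmeas measurableSet_Ioc (vol_Ioc_ne_top _ _)
        (fun v hv => by
          rw [abs_of_nonneg (hb01 v (lt_trans one_pos hv.1)).1]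
          exact (hb01 v (lt_trans one_pos hv.1)).2)
    rw [hsplit, setIntegral_union (Set.Ioc_disjoint_Ioc_of_le le_rfl) measurableSet_Ioc hi1 hi2]
    have hp1 : ∫ v in Ioc (0:ℝ) 1, min 1 (v ^ (-a)) ≤ 1 := by
      have h1 : ∫ v in Ioc (0:ℝ) 1, min 1 (v ^ (-a)) ≤ ∫ _v in Ioc (0:ℝ) 1, (1:ℝ) :=
        setIntegral_mono_on hi1 (integrableOn_const (vol_Ioc_ne_top _ _))
          measurableSet_Ioc (fun v hv => (hb01 v hv.1).2)
      have h2 : ∫ _v in Ioc (0:ℝ) 1, (1:ℝ) = 1 := by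
        rw [setIntegral_const, Real.volume_real_Ioc, smul_eq_mul, mul_one]
        norm_num
      linarith
    have hp2 : ∫ v in Ioc (1:ℝ) T, min 1 (v ^ (-a)) ≤ 1 / (a - 1) := by
      have h1 : ∫ v in Ioc (1:ℝ) T, min 1 (v ^ (-a)) ≤ ∫ v in Ioc (1:ℝ) T, v ^ (-a) := by
        refine setIntegral_mono_on hi2 ?_ measurableSet_Ioc (fun v _ => min_le_right _ _)
        refine intOn_of_bdd (measurable_id.pow_const (-a)) measurableSet_Ioc
          (vol_Ioc_ne_top _ _) (M := 1) (fun v hv => ?_)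
        rw [abs_of_nonneg (Real.rpow_nonneg (by linarith [hv.1]) _)]
        exact Real.rpow_le_one_of_one_le_of_nonpos hv.1.le (by linarith)
      have h2 : ∫ v in Ioc (1:ℝ) T, v ^ (-a) = (T ^ (-a + 1) - 1 ^ (-a + 1)) / (-a + 1) := by
        rw [← intervalIntegral.integral_of_le hT.le]
        exact integral_rpow (Or.inr ⟨by intro h; simp at h; linarith,
          fun h => by
            rw [Set.mem_uIcc] at h
            rcases h with h | h <;> linarith [h.1, h.2]⟩)
      have h3 : (T ^ (-a + 1) - (1:ℝ) ^ (-a + 1)) / (-a + 1) ≤ 1 / (a - 1) := by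
        rw [Real.one_rpow]
        have hT1 : (0:ℝ) ≤ T ^ (-a + 1) := Real.rpow_nonneg (by linarith) _
        have e : (T ^ (-a + 1) - 1) / (-a + 1) = (1 - T ^ (-a + 1)) / (a - 1) := by
          rw [show (-a + 1) = -(a - 1) by ring, div_neg, ← neg_div]
          ring_nf
        rw [e, div_le_div_iff₀ (by linarith) (by linarith)]
        nlinarith
      linarith
    linarith

private lemma key_lemma (b : ℝ) (hb : 0 < b) (K t : ℝ) (hK : 0 ≤ K) (ht : -K < t) :
    ∫ s in Ioc (-K) t, min 1 ((t - s) ^ (-(b + 1))) * min 1 ((s + K) ^ (-b))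
      ≤ (2 ^ b * (2 + 1 / b)) * min 1 ((t + K) ^ (-b)) := by
  have hτ : 0 < t + K := by linarith
  have hC1 : (1:ℝ) ≤ 2 ^ b * (2 + 1 / b) := by
    have h1 : (1:ℝ) ≤ 2 ^ b := Real.one_le_rpow one_le_two hb.le
    have h2 : (0:ℝ) < 1 / b := by positivity
    nlinarith
  have hbd : ∀ s ∈ Ioc (-K) t, |min 1 ((t - s) ^ (-(b + 1))) * min 1 ((s + K) ^ (-b))| ≤ 1 := by
    intro s hs
    have h1 : 0 ≤ min 1 ((t - s) ^ (-(b + 1))) :=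
      le_min zero_le_one (Real.rpow_nonneg (by linarith [hs.2]) _)
    have h2 : 0 ≤ min 1 ((s + K) ^ (-b)) :=
      le_min zero_le_one (Real.rpow_nonneg (by linarith [hs.1]) _)
    rw [abs_of_nonneg (mul_nonneg h1 h2)]
    exact mul_le_one₀ (min_le_left _ _) h2 (min_le_left _ _)
  have hminnn : 0 ≤ min 1 ((t + K) ^ (-b)) := le_min zero_le_one (Real.rpow_nonneg hτ.le _)
  rcases le_or_gt (t + K) 1 with hτ1 | hτ1
  · have hmin : min 1 ((t + K) ^ (-b)) = 1 :=
      min_eq_left (Real.one_le_rpow_of_pos_of_le_one_of_nonpos hτ hτ1 (by linarith))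
    rw [hmin, mul_one]
    have h1 : ∫ s in Ioc (-K) t, min 1 ((t - s) ^ (-(b + 1))) * min 1 ((s + K) ^ (-b))
        ≤ ∫ _s in Ioc (-K) t, (1:ℝ) := by
      refine setIntegral_mono_on
        (intOn_of_bdd (minmul_meas t K _ _) measurableSet_Ioc (vol_Ioc_ne_top _ _) hbd)
        (integrableOn_const (vol_Ioc_ne_top _ _)) measurableSet_Ioc ?_
      intro s hs
      exact (abs_le.mp (hbd s hs)).2
    have h2 : ∫ _s in Ioc (-K) t, (1:ℝ) = max (t - -K) 0 := by
      rw [setIntegral_const, Real.volume_real_Ioc, smul_eq_mul, mul_one]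
    have h3 : max (t - -K) 0 ≤ 1 := max_le (by linarith) zero_le_one
    linarith
  · have hmin : min 1 ((t + K) ^ (-b)) = (t + K) ^ (-b) :=
      min_eq_right (Real.rpow_le_one_of_one_le_of_nonpos hτ1.le (by linarith))
    rw [hmin]
    set c := (t - K) / 2 with hcdef
    have hc1 : -K < c := by rw [hcdef]; linarith
    have hc2 : c < t := by rw [hcdef]; linarith
    have hcK : c + K = (t + K) / 2 := by rw [hcdef]; ring
    have htc : t - c = (t + K) / 2 := by rw [hcdef]; ring
    have hτ2 : (0:ℝ) < (t + K) / 2 := by linarith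
    have hsplit : Ioc (-K) t = Ioc (-K) c ∪ Ioc c t :=
      (Ioc_union_Ioc_eq_Ioc hc1.le hc2.le).symm
    have hi1 : IntegrableOn (fun s : ℝ => min 1 ((t - s) ^ (-(b + 1))) * min 1 ((s + K) ^ (-b)))
        (Ioc (-K) c) :=
      intOn_of_bdd (minmul_meas t K _ _) measurableSet_Ioc (vol_Ioc_ne_top _ _)
        (fun s hs => hbd s (hsplit ▸ Set.mem_union_left _ hs))
    have hi2 : IntegrableOn (fun s : ℝ => min 1 ((t - s) ^ (-(b + 1))) * min 1 ((s + K) ^ (-b)))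
        (Ioc c t) :=
      intOn_of_bdd (minmul_meas t K _ _) measurableSet_Ioc (vol_Ioc_ne_top _ _)
        (fun s hs => hbd s (hsplit ▸ Set.mem_union_right _ hs))
    rw [hsplit, setIntegral_union (Set.Ioc_disjoint_Ioc_of_le le_rfl) measurableSet_Ioc hi1 hi2]
    have hhalf : ((t + K) / 2) ^ (-b) = 2 ^ b * (t + K) ^ (-b) := by
      rw [Real.div_rpow hτ.le (by norm_num : (0:ℝ) ≤ 2),
        Real.rpow_neg (by norm_num : (0:ℝ) ≤ 2), div_eq_mul_inv, inv_inv, mul_comm]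
    -- piece 1
    have hp1 : ∫ s in Ioc (-K) c, min 1 ((t - s) ^ (-(b + 1))) * min 1 ((s + K) ^ (-b))
        ≤ ((t + K) / 2) ^ (-b) := by
      have h1 : ∫ s in Ioc (-K) c, min 1 ((t - s) ^ (-(b + 1))) * min 1 ((s + K) ^ (-b))
          ≤ ∫ _s in Ioc (-K) c, ((t + K) / 2) ^ (-(b + 1)) := by
        refine setIntegral_mono_on hi1
          (integrableOn_const (vol_Ioc_ne_top _ _)) measurableSet_Ioc ?_
        intro s hs
        have hts : (t + K) / 2 ≤ t - s := by
          have := hs.2; linarith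
        have h2 : min 1 ((s + K) ^ (-b)) ≤ 1 := min_le_left _ _
        have h2' : 0 ≤ min 1 ((s + K) ^ (-b)) :=
          le_min zero_le_one (Real.rpow_nonneg (by linarith [hs.1]) _)
        have h3 : min 1 ((t - s) ^ (-(b + 1))) ≤ ((t + K) / 2) ^ (-(b + 1)) :=
          le_trans (min_le_right _ _) (Real.rpow_le_rpow_of_nonpos hτ2 hts (by linarith))
        calc min 1 ((t - s) ^ (-(b + 1))) * min 1 ((s + K) ^ (-b))
            ≤ ((t + K) / 2) ^ (-(b + 1)) * 1 :=
              mul_le_mul h3 h2 h2' (Real.rpow_nonneg hτ2.le _)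
          _ = ((t + K) / 2) ^ (-(b + 1)) := mul_one _
      have h2 : ∫ _s in Ioc (-K) c, (((t + K) / 2) ^ (-(b + 1)) : ℝ)
          = ((t + K) / 2) * ((t + K) / 2) ^ (-(b + 1)) := by
        rw [setIntegral_const, Real.volume_real_Ioc, smul_eq_mul,
          max_eq_left (by linarith : (0:ℝ) ≤ c - -K)]
        congr 1
        linarith
      have h3 : ((t + K) / 2) * ((t + K) / 2) ^ (-(b + 1)) = ((t + K) / 2) ^ (-b) := by
        nth_rewrite 1 [← Real.rpow_one ((t + K) / 2)]
        rw [← Real.rpow_add hτ2]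
        ring_nf
      linarith
    -- piece 2
    have hp2 : ∫ s in Ioc c t, min 1 ((t - s) ^ (-(b + 1))) * min 1 ((s + K) ^ (-b))
        ≤ (1 + 1 / b) * ((t + K) / 2) ^ (-b) := by
      have h1 : ∫ s in Ioc c t, min 1 ((t - s) ^ (-(b + 1))) * min 1 ((s + K) ^ (-b))
          ≤ ∫ s in Ioc c t, min 1 ((t - s) ^ (-(b + 1))) * ((t + K) / 2) ^ (-b) := by
        refine setIntegral_mono_on hi2 ?_ measurableSet_Ioc ?_
        · refine intOn_of_bdd ?_ measurableSet_Ioc (vol_Ioc_ne_top _ _)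
            (M := ((t + K) / 2) ^ (-b)) (fun s hs => ?_)
          · have h1 : Measurable fun s : ℝ => t - s := measurable_const.sub measurable_id
            exact (measurable_const.min (h1.pow_const (-(b+1)))).mul_const _
          · have hknn : 0 ≤ min 1 ((t - s) ^ (-(b + 1))) :=
              le_min zero_le_one (Real.rpow_nonneg (by linarith [hs.2]) _)
            have hk1 : min 1 ((t - s) ^ (-(b + 1))) ≤ 1 := min_le_left _ _
            have hrnn : 0 ≤ ((t + K) / 2) ^ (-b) := Real.rpow_nonneg hτ2.le _
            rw [abs_of_nonneg (mul_nonneg hknn hrnn)]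
            nlinarith
        · intro s hs
          have hsK : (t + K) / 2 ≤ s + K := by
            have := hs.1; linarith
          have hmm : min 1 ((s + K) ^ (-b)) ≤ ((t + K) / 2) ^ (-b) :=
            le_trans (min_le_right _ _) (Real.rpow_le_rpow_of_nonpos hτ2 hsK (by linarith))
          have hknn : 0 ≤ min 1 ((t - s) ^ (-(b + 1))) :=
            le_min zero_le_one (Real.rpow_nonneg (by linarith [hs.2]) _)
          exact mul_le_mul_of_nonneg_left hmm hknn
      have h2 : ∫ s in Ioc c t, min 1 ((t - s) ^ (-(b + 1))) * ((t + K) / 2) ^ (-b)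
          = (∫ s in Ioc c t, min 1 ((t - s) ^ (-(b + 1)))) * ((t + K) / 2) ^ (-b) :=
        integral_mul_const _ _
      have h3 : ∫ s in Ioc c t, min 1 ((t - s) ^ (-(b + 1)))
          = ∫ v in Ioc (0:ℝ) (t - c), min 1 (v ^ (-(b + 1))) := by
        rw [← intervalIntegral.integral_of_le hc2.le,
          intervalIntegral.integral_comp_sub_left (fun v => min 1 (v ^ (-(b + 1)))) t]
        rw [sub_self]
        rw [intervalIntegral.integral_of_le (by linarith : (0:ℝ) ≤ t - c)]
      have h4 := tail_lemma (b + 1) (by linarith) (t - c)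
      have h5 : b + 1 - 1 = b := by ring
      rw [h5] at h4
      have h6 : 0 ≤ ((t + K) / 2) ^ (-b) := Real.rpow_nonneg hτ2.le _
      calc ∫ s in Ioc c t, min 1 ((t - s) ^ (-(b + 1))) * min 1 ((s + K) ^ (-b))
          ≤ (∫ s in Ioc c t, min 1 ((t - s) ^ (-(b + 1)))) * ((t + K) / 2) ^ (-b) := by
            rw [← h2]; exact h1
        _ ≤ (1 + 1 / b) * ((t + K) / 2) ^ (-b) := by
            rw [h3]
            exact mul_le_mul_of_nonneg_right h4 h6
    have hfin : (2:ℝ) ^ b * (2 + 1 / b) * (t + K) ^ (-b)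
        = ((t + K) / 2) ^ (-b) + (1 + 1 / b) * ((t + K) / 2) ^ (-b) := by
      rw [hhalf]; ring
    linarith

theorem stmt12 (d : ℕ) (hd : 3 ≤ d) :
    ∃ C > 0, ∀ K : ℝ, 0 ≤ K → ∀ J : ℕ → ℝ → ℝ,
      (∀ s : ℝ, J 0 s = min 1 ((s + K) ^ (-((d : ℝ) / 2 - 1)))) →
      (∀ n : ℕ, ∀ t : ℝ, -K < t →
        J (n + 1) t = ∫ s in Set.Ioc (-K) t,
          min 1 ((t - s) ^ (-(d : ℝ) / 2)) * J n s) →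
      ∀ n : ℕ, ∀ t : ℝ, -K < t →
        J n t ≤ C ^ n * min 1 ((t + K) ^ (-((d : ℝ) / 2 - 1))) := by
  have hd3 : (3:ℝ) ≤ (d : ℝ) := by exact_mod_cast hd
  have hb : 0 < (d : ℝ) / 2 - 1 := by linarith
  refine ⟨2 ^ ((d : ℝ) / 2 - 1) * (2 + 1 / ((d : ℝ) / 2 - 1)), by positivity, ?_⟩
  intro K hK J hJ0 hJrec
  set C : ℝ := 2 ^ ((d : ℝ) / 2 - 1) * (2 + 1 / ((d : ℝ) / 2 - 1)) with hCdef
  have hC0 : 0 < C := by rw [hCdef]; positivity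
  have hnn : ∀ n, ∀ s : ℝ, -K < s → 0 ≤ J n s := by
    intro n
    induction n with
    | zero =>
      intro s hs
      rw [hJ0]
      exact le_min zero_le_one (Real.rpow_nonneg (by linarith) _)
    | succ n ih =>
      intro t ht
      rw [hJrec n t ht]
      refine setIntegral_nonneg measurableSet_Ioc (fun s hs => ?_)
      exact mul_nonneg (le_min zero_le_one (Real.rpow_nonneg (by linarith [hs.2]) _)) (ih s hs.1)
  intro n
  induction n with
  | zero =>
    intro t ht
    rw [hJ0, pow_zero, one_mul]
  | succ n ih =>
    intro t ht
    rw [hJrec n t ht]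
    have hkey := key_lemma ((d : ℝ) / 2 - 1) hb K t hK ht
    have hexp : -((d : ℝ) / 2 - 1 + 1) = -(d : ℝ) / 2 := by ring
    rw [hexp] at hkey
    have hCn : (0:ℝ) ≤ C ^ n := pow_nonneg hC0.le n
    have step1 : ∫ s in Ioc (-K) t, min 1 ((t - s) ^ (-(d : ℝ) / 2)) * J n s
        ≤ ∫ s in Ioc (-K) t,
            C ^ n * (min 1 ((t - s) ^ (-(d : ℝ) / 2)) * min 1 ((s + K) ^ (-((d : ℝ) / 2 - 1)))) := by
      refine integral_mono_of_nonneg ?_ ?_ ?_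
      · refine (ae_restrict_iff' measurableSet_Ioc).2 (ae_of_all _ (fun s hs => ?_))
        exact mul_nonneg (le_min zero_le_one (Real.rpow_nonneg (by linarith [hs.2]) _))
          (hnn n s hs.1)
      · refine intOn_of_bdd ?_ measurableSet_Ioc (vol_Ioc_ne_top _ _) (M := C ^ n)
          (fun s hs => ?_)
        · exact measurable_const.mul (minmul_meas t K _ _)
        · have h1 : 0 ≤ min 1 ((t - s) ^ (-(d : ℝ) / 2)) :=
            le_min zero_le_one (Real.rpow_nonneg (by linarith [hs.2]) _)
          have h1' : min 1 ((t - s) ^ (-(d : ℝ) / 2)) ≤ 1 := min_le_left _ _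
          have h2 : 0 ≤ min 1 ((s + K) ^ (-((d : ℝ) / 2 - 1))) :=
            le_min zero_le_one (Real.rpow_nonneg (by linarith [hs.1]) _)
          have h2' : min 1 ((s + K) ^ (-((d : ℝ) / 2 - 1))) ≤ 1 := min_le_left _ _
          rw [abs_of_nonneg (mul_nonneg hCn (mul_nonneg h1 h2))]
          have h12 : min 1 ((t - s) ^ (-(d : ℝ) / 2))
              * min 1 ((s + K) ^ (-((d : ℝ) / 2 - 1))) ≤ 1 := mul_le_one₀ h1' h2 h2'
          nlinarith
      · refine (ae_restrict_iff' measurableSet_Ioc).2 (ae_of_all _ (fun s hs => ?_))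
        have hknn : 0 ≤ min 1 ((t - s) ^ (-(d : ℝ) / 2)) :=
          le_min zero_le_one (Real.rpow_nonneg (by linarith [hs.2]) _)
        calc min 1 ((t - s) ^ (-(d : ℝ) / 2)) * J n s
            ≤ min 1 ((t - s) ^ (-(d : ℝ) / 2))
              * (C ^ n * min 1 ((s + K) ^ (-((d : ℝ) / 2 - 1)))) :=
              mul_le_mul_of_nonneg_left (ih s hs.1) hknn
          _ = C ^ n * (min 1 ((t - s) ^ (-(d : ℝ) / 2))
              * min 1 ((s + K) ^ (-((d : ℝ) / 2 - 1)))) := by ring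
    have step2 : ∫ s in Ioc (-K) t,
        C ^ n * (min 1 ((t - s) ^ (-(d : ℝ) / 2)) * min 1 ((s + K) ^ (-((d : ℝ) / 2 - 1))))
        = C ^ n * ∫ s in Ioc (-K) t,
            min 1 ((t - s) ^ (-(d : ℝ) / 2)) * min 1 ((s + K) ^ (-((d : ℝ) / 2 - 1))) :=
      integral_const_mul _ _
    calc ∫ s in Ioc (-K) t, min 1 ((t - s) ^ (-(d : ℝ) / 2)) * J n s
        ≤ C ^ n * ∫ s in Ioc (-K) t,
            min 1 ((t - s) ^ (-(d : ℝ) / 2)) * min 1 ((s + K) ^ (-((d : ℝ) / 2 - 1))) := by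
          rw [← step2]; exact step1
      _ ≤ C ^ n * (C * min 1 ((t + K) ^ (-((d : ℝ) / 2 - 1)))) :=
          mul_le_mul_of_nonneg_left hkey hCn
      _ = C ^ (n + 1) * min 1 ((t + K) ^ (-((d : ℝ) / 2 - 1))) := by ring
end
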